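/- Let p be a prime with p ≡ 5 (mod 6) and let k be a field of characteristic p. Let R = k[a,b,c] and work in the polynomial ring R[X₁,X₂,X₃,X₄]. Let κ = X₂²X₄² − 4X₁X₃X₄² + 4X₁³X₄ − 4X₃³X₄ + 4X₁²X₃² − 8X₁X₂²X₃ + 4X₂⁴ and v = aX₁ + bX₂ + cX₃ + X₄. For indices (i₁,i₂,i₃,i₄), let c_{i₁,i₂,i₃,i₄} ∈ R denote the coefficient of X₁^{i₁}X₂^{i₂}X₃^{i₃}X₄^{i₄} in (vκ)^{p−1}. Let H_X be the 3×3 matrix over R with rows: (c_{2p−2,p−1,p−1,p−1} − a^p c_{p−2,p−1,p−1,2p−1}, c_{p−2,2p−1,p−1,p−1} − b^p c_{p−2,p−1,p−1,2p−1}, c_{p−2,p−1,2p−1,p−1} − c^p c_{p−2,p−1,p−1,2p−1}); (c_{2p−1,p−2,p−1,p−1} − a^p c_{p−1,p−2,p−1,2p−1}, c_{p−1,2p−2,p−1,p−1} − b^p c_{p−1,p−2,p−1,2p−1}, c_{p−1,p−2,2p−1,p−1} − c^p c_{p−1,p−2,p−1,2p−1}); (c_{2p−1,p−1,p−2,p−1}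 − a^p c_{p−1,p−1,p−2,2p−1}, c_{p−1,2p−1,p−2,p−1} − b^p c_{p−1,p−1,p−2,2p−1}, c_{p−1,p−1,2p−2,p−1} − c^p c_{p−1,p−1,p−2,2p−1}). Then det(H_X), considered as a polynomial in the variable b (with coefficients in k[a,c]), has degree exactly 4(p−1). -/

import Mathlib

open MvPolynomial

noncomputable section Stmt2

/-- Exponent vector `(i₁,i₂,i₃,i₄)` for the variables `X₁,X₂,X₃,X₄`. -/
def expv (i1 i2 i3 i4 : ℕ) : Fin 4 →₀ ℕ := Finsupp.equivFunOnFinite.symm ![i1, i2, i3, i4]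

variable (k : Type*) [Field k]

/-- The Kummer quartic surface `κ` of the genus-2 curve `z² = x⁶ − 1`, as a polynomial in
`X₁ = X 0, X₂ = X 1, X₃ = X 2, X₄ = X 3` over `R = k[a,b,c]`. -/
def kappa2 : MvPolynomial (Fin 4) (MvPolynomial (Fin 3) k) :=
  X 1 ^ 2 * X 3 ^ 2 - 4 * X 0 * X 2 * X 3 ^ 2 + 4 * X 0 ^ 3 * X 3 - 4 * X 2 ^ 3 * X 3
    + 4 * X 0 ^ 2 * X 2 ^ 2 - 8 * X 0 * X 1 ^ 2 * X 2 + 4 * X 1 ^ 4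

/-- The plane `v = a X₁ + b X₂ + c X₃ + X₄`, where `a = X 0, b = X 1, c = X 2` in
`R = k[a,b,c]`. -/
def vpl2 : MvPolynomial (Fin 4) (MvPolynomial (Fin 3) k) :=
  C (X 0) * X 0 + C (X 1) * X 1 + C (X 2) * X 2 + X 3

/-- `c_{i₁,i₂,i₃,i₄} ∈ R = k[a,b,c]`: the coefficient of `X₁^{i₁}X₂^{i₂}X₃^{i₃}X₄^{i₄}`
in `(vκ)^{p−1}`. -/
def cc2 (p i1 i2 i3 i4 : ℕ) : MvPolynomial (Fin 3) k :=
  coeff (expv i1 i2 i3 i4) ((vpl2 k * kappa2 k) ^ (p - 1))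

/-- The Hasse–Witt matrix `H_X` of the plane quartic `X = V ∩ K`. -/
def HX2 (p : ℕ) : Matrix (Fin 3) (Fin 3) (MvPolynomial (Fin 3) k) :=
  !![cc2 k p (2*p-2) (p-1) (p-1) (p-1) - X 0 ^ p * cc2 k p (p-2) (p-1) (p-1) (2*p-1),
     cc2 k p (p-2) (2*p-1) (p-1) (p-1) - X 1 ^ p * cc2 k p (p-2) (p-1) (p-1) (2*p-1),
     cc2 k p (p-2) (p-1) (2*p-1) (p-1) - X 2 ^ p * cc2 k p (p-2) (p-1) (p-1) (2*p-1);
     cc2 k p (2*p-1) (p-2) (p-1) (p-1) - X 0 ^ p * cc2 k p (p-1) (p-2) (p-1) (2*p-1),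
     cc2 k p (p-1) (2*p-2) (p-1) (p-1) - X 1 ^ p * cc2 k p (p-1) (p-2) (p-1) (2*p-1),
     cc2 k p (p-1) (p-2) (2*p-1) (p-1) - X 2 ^ p * cc2 k p (p-1) (p-2) (p-1) (2*p-1);
     cc2 k p (2*p-1) (p-1) (p-2) (p-1) - X 0 ^ p * cc2 k p (p-1) (p-1) (p-2) (2*p-1),
     cc2 k p (p-1) (2*p-1) (p-2) (p-1) - X 1 ^ p * cc2 k p (p-1) (p-1) (p-2) (2*p-1),
     cc2 k p (p-1) (p-1) (2*p-2) (p-1) - X 2 ^ p * cc2 k p (p-1) (p-1) (p-2) (2*p-1)]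

-- ===== aux =====
namespace Stmt2Aux
open Finset

lemma expv_apply (i1 i2 i3 i4 : ℕ) (x : Fin 4) :
    expv i1 i2 i3 i4 x = ![i1, i2, i3, i4] x := by
  simp [expv]

lemma expv_inj {a b c d a' b' c' d' : ℕ} :
    expv a b c d = expv a' b' c' d' ↔ a = a' ∧ b = b' ∧ c = c' ∧ d = d' := by
  constructor
  · intro h
    refine ⟨?_, ?_, ?_, ?_⟩
    · simpa [expv_apply] using DFunLike.congr_fun h 0
    · simpa [expv_apply] using DFunLike.congr_fun h 1
    · simpa [expv_apply] using DFunLike.congr_fun h 2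
    · simpa [expv_apply] using DFunLike.congr_fun h 3
  · rintro ⟨rfl, rfl, rfl, rfl⟩; rfl

/-- the ring hom `k[a,b,c] → k[X]` sending `a ↦ 0, b ↦ X, c ↦ 0`. -/
def pi3 : MvPolynomial (Fin 3) k →+* Polynomial k :=
  eval₂Hom Polynomial.C ![0, Polynomial.X, 0]

@[simp] lemma pi3_C (x : k) : pi3 k (C x) = Polynomial.C x := by simp [pi3]

@[simp] lemma pi3_X0 : pi3 k (X 0) = 0 := by simp [pi3]
@[simp] lemma pi3_X1 : pi3 k (X 1) = Polynomial.X := by simp [pi3]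
@[simp] lemma pi3_X2 : pi3 k (X 2) = 0 := by simp [pi3]

/-- Bridging: the `t`-th coefficient of `pi3 y` is the coefficient of `b^t` in `y`. -/
lemma coeff_pi3 (y : MvPolynomial (Fin 3) k) (t : ℕ) :
    (pi3 k y).coeff t = MvPolynomial.coeff (Finsupp.single 1 t) y := by
  induction y using MvPolynomial.induction_on' with
  | monomial m r =>
    rw [pi3, coeff_monomial, eval₂Hom_monomial]
    by_cases h0 : m 0 = 0
    · by_cases h2 : m 2 = 0
      · have hm : m = Finsupp.single 1 (m 1) := by
          ext x; fin_cases x <;> simp [Finsupp.single_apply, h0, h2]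
        rw [hm, Finsupp.prod_single_index (by simp)]
        have : (![0, Polynomial.X, 0] : Fin 3 → Polynomial k) 1 = Polynomial.X := rfl
        rw [this, Polynomial.coeff_C_mul, Polynomial.coeff_X_pow]
        have he : (m = Finsupp.single 1 t) ↔ m 1 = t :=
          ⟨fun h => by simpa using DFunLike.congr_fun h 1, fun h => by rw [hm, h]⟩
        rw [← hm]
        by_cases h1 : m 1 = t
        · rw [if_pos h1.symm, if_pos (he.mpr h1), mul_one]
        · rw [if_neg (fun hh => h1 hh.symm), if_neg (he.not.mpr h1), mul_zero]
      · have : m.prod (fun i e => (![0, Polynomial.X, 0] : Fin 3 → Polynomial k) i ^ e) = 0 := by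
          apply Finset.prod_eq_zero (i := (2 : Fin 3)) (by simp [Finsupp.mem_support_iff, h2])
          simp [zero_pow h2]
        rw [this, mul_zero]
        have : ¬ m = Finsupp.single 1 t := fun h => h2 (by simpa using (DFunLike.congr_fun h 2))
        simp [this]
    · have : m.prod (fun i e => (![0, Polynomial.X, 0] : Fin 3 → Polynomial k) i ^ e) = 0 := by
        apply Finset.prod_eq_zero (i := (0 : Fin 3)) (by simp [Finsupp.mem_support_iff, h0])
        simp [zero_pow h0]
      rw [this, mul_zero]
      have : ¬ m = Finsupp.single 1 t := fun h => h0 (by simpa using (DFunLike.congr_fun h 0))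
      simp [this]
  | add f g hf hg => simp [map_add, MvPolynomial.coeff_add, hf, hg]


/-- The Kummer quartic over `k` itself. -/
def kap0 : MvPolynomial (Fin 4) k :=
  X 1 ^ 2 * X 3 ^ 2 - 4 * X 0 * X 2 * X 3 ^ 2 + 4 * X 0 ^ 3 * X 3 - 4 * X 2 ^ 3 * X 3
    + 4 * X 0 ^ 2 * X 2 ^ 2 - 8 * X 0 * X 1 ^ 2 * X 2 + 4 * X 1 ^ 4

def ww : MvPolynomial (Fin 4) k := (X 0 ^ 2 - X 2 * X 3) * (X 0 * X 3 + X 2 ^ 2)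

def hh : MvPolynomial (Fin 4) k := X 3 ^ 2 - 8 * X 0 * X 2 + 4 * X 1 ^ 2

lemma kap0_eq : kap0 k = 4 * ww k + X 1 ^ 2 * hh k := by
  unfold kap0 ww hh; ring

/-- generic expansion of a power of a binomial of monomials -/
lemma binom_mono_pow {σ : Type*} (u v : σ →₀ ℕ) (α β : k) (n : ℕ) :
    (monomial u α + monomial v β) ^ n
      = ∑ s ∈ Finset.range (n + 1),
          monomial (s • u + (n - s) • v) (α ^ s * β ^ (n - s) * (n.choose s : k)) := by
  rw [add_pow]
  refine Finset.sum_congr rfl fun s _ => ?_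
  rw [monomial_pow, monomial_pow, monomial_mul, ← C_eq_coe_nat, mul_comm _ (C (n.choose s : k)),
    C_mul_monomial]
  congr 1
  ring

lemma ww_eq : ww k = (monomial (Finsupp.single 0 2) 1 + monomial (Finsupp.single 2 1 + Finsupp.single 3 1) (-1))
    * (monomial (Finsupp.single 0 1 + Finsupp.single 3 1) 1 + monomial (Finsupp.single 2 2) 1) := by
  unfold ww
  rw [show (X 2 : MvPolynomial (Fin 4) k) * X 3 = monomial (Finsupp.single 2 1 + Finsupp.single 3 1) 1 by
      rw [← pow_one (X 2 : MvPolynomial (Fin 4) k), ← pow_one (X 3 : MvPolynomial (Fin 4) k),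
        X_pow_eq_monomial, X_pow_eq_monomial, monomial_mul, one_mul],
    show (X 0 : MvPolynomial (Fin 4) k) * X 3 = monomial (Finsupp.single 0 1 + Finsupp.single 3 1) 1 by
      rw [← pow_one (X 0 : MvPolynomial (Fin 4) k), ← pow_one (X 3 : MvPolynomial (Fin 4) k),
        X_pow_eq_monomial, X_pow_eq_monomial, monomial_mul, one_mul],
    X_pow_eq_monomial, X_pow_eq_monomial, sub_eq_add_neg, ← map_neg]

lemma exponent_eq (n s t : ℕ) :
    s • (Finsupp.single (0 : Fin 4) 2) + (n - s) • (Finsupp.single 2 1 + Finsupp.single 3 1)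
      + (t • (Finsupp.single 0 1 + Finsupp.single 3 1) + (n - t) • (Finsupp.single 2 2))
      = expv (2 * s + t) 0 ((n - s) + 2 * (n - t)) ((n - s) + t) := by
  ext x
  fin_cases x <;>
    simp [expv_apply, Finsupp.single_apply, mul_comm]

lemma coeff_ww_pow (n : ℕ) (e : Fin 4 →₀ ℕ) :
    MvPolynomial.coeff e ((ww k) ^ n)
      = ∑ s ∈ Finset.range (n + 1), ∑ t ∈ Finset.range (n + 1),
          (if expv (2 * s + t) 0 ((n - s) + 2 * (n - t)) ((n - s) + t) = e
           then ((-1) ^ (n - s) * ((n.choose s : k) * (n.choose t : k))) else 0) := by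
  rw [ww_eq, mul_pow, binom_mono_pow, binom_mono_pow, Finset.sum_mul_sum]
  rw [MvPolynomial.coeff_sum]
  refine Finset.sum_congr rfl fun s _ => ?_
  rw [MvPolynomial.coeff_sum]
  refine Finset.sum_congr rfl fun t _ => ?_
  rw [monomial_mul, coeff_monomial, exponent_eq]
  split_ifs <;> [skip; rfl]
  ring


/-- coefficients of `kap0 ^ n` at multidegrees with no `X 1` reduce to `ww ^ n`. -/
lemma coeff_kap0_pow (n : ℕ) (e : Fin 4 →₀ ℕ) (he : e 1 = 0) :
    MvPolynomial.coeff e ((kap0 k) ^ n) = (4 : k) ^ n * MvPolynomial.coeff e ((ww k) ^ n) := by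
  rw [kap0_eq, add_pow, MvPolynomial.coeff_sum, Finset.sum_range_succ]
  have h1 : ∀ i ∈ Finset.range n,
      MvPolynomial.coeff e ((4 * ww k) ^ i * (X 1 ^ 2 * hh k) ^ (n - i) * (n.choose i : MvPolynomial (Fin 4) k)) = 0 := by
    intro i hi
    have hin : n - i ≠ 0 := by have := Finset.mem_range.mp hi; omega
    have : (4 * ww k) ^ i * (X 1 ^ 2 * hh k) ^ (n - i) * (n.choose i : MvPolynomial (Fin 4) k)
        = monomial (Finsupp.single 1 (2 * (n - i))) 1
          * ((4 * ww k) ^ i * hh k ^ (n - i) * (n.choose i : MvPolynomial (Fin 4) k)) := by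
      rw [mul_pow (X 1 ^ 2), ← pow_mul, X_pow_eq_monomial]; ring
    rw [this, coeff_monomial_mul']
    rw [if_neg]
    rw [Finsupp.single_le_iff, he]
    omega
  rw [Finset.sum_eq_zero h1, zero_add, tsub_self, pow_zero, Nat.choose_self, Nat.cast_one,
    mul_one, mul_one, mul_pow, (map_ofNat (C : k →+* MvPolynomial (Fin 4) k) 4).symm,
    ← map_pow, coeff_C_mul]

/-- `(4 : k) ^ (p - 1) = 1` in characteristic `p`. -/
lemma four_pow (p : ℕ) (hp : p.Prime) (hp2 : p ≠ 2) [CharP k p] : (4 : k) ^ (p - 1) = 1 := by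
  haveI : Fact p.Prime := ⟨hp⟩
  have hdvd : ¬ p ∣ 4 := by
    intro h
    have h4 := Nat.le_of_dvd (by norm_num) h
    have h2 := hp.two_le
    interval_cases p
    · exact hp2 rfl
    · omega
    · norm_num at hp
  have hz : ((4 : ZMod p)) ≠ 0 := by
    have : ((4 : ℕ) : ZMod p) ≠ 0 := by
      rw [Ne, ZMod.natCast_eq_zero_iff]
      exact hdvd
    simpa using this
  have key : (4 : ZMod p) ^ (p - 1) = 1 := ZMod.pow_card_sub_one_eq_one hz
  have := congrArg (⇑(ZMod.castHom (dvd_refl p) k)) key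
  rw [map_pow, map_ofNat, map_one] at this
  exact this

/-- `(p-1 choose i) = (-1)^i` in characteristic `p`. -/
lemma choose_p_sub_one (p : ℕ) (hp : p.Prime) [CharP k p] :
    ∀ i, i ≤ p - 1 → (((p - 1).choose i : ℕ) : k) = (-1) ^ i := by
  intro i
  induction i with
  | zero => simp
  | succ i ih =>
    intro hi1
    have hi : i ≤ p - 1 := by omega
    have key := Nat.choose_succ_right_eq (p - 1) i
    have hcast : (((p - 1).choose (i + 1) : ℕ) : k) * ((i + 1 : ℕ) : k)
        = (((p - 1).choose i : ℕ) : k) * ((p - 1 - i : ℕ) : k) := by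
      rw [← Nat.cast_mul, ← Nat.cast_mul, key]
    have hp1 : ((p : ℕ) : k) = 0 := CharP.cast_eq_zero k p
    have hsub : ((p - 1 - i : ℕ) : k) = -((i + 1 : ℕ) : k) := by
      have h1 : p - 1 - i = p - (i + 1) := by omega
      have h2 : i + 1 ≤ p := by have := hp.two_le; omega
      rw [h1, Nat.cast_sub h2, hp1]
      push_cast
      ring
    have hne : ((i + 1 : ℕ) : k) ≠ 0 := by
      rw [Ne, CharP.cast_eq_zero_iff k p]
      intro h
      have := Nat.le_of_dvd (by omega) h
      have := hp.two_le
      omega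
    have : (((p - 1).choose (i + 1) : ℕ) : k) * ((i + 1 : ℕ) : k)
        = (-1) ^ (i + 1) * ((i + 1 : ℕ) : k) := by
      rw [hcast, ih hi, hsub, pow_succ]
      ring
    exact mul_right_cancel₀ hne this


lemma coeff_ww_pow_zero (n m1 m3 m4 : ℕ)
    (h : ∀ s t : ℕ, s ≤ n → t ≤ n →
      ¬(2 * s + t = m1 ∧ (n - s) + 2 * (n - t) = m3 ∧ (n - s) + t = m4)) :
    MvPolynomial.coeff (expv m1 0 m3 m4) ((ww k) ^ n) = 0 := by
  rw [coeff_ww_pow]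
  refine Finset.sum_eq_zero fun s hs => Finset.sum_eq_zero fun t ht => ?_
  rw [if_neg]
  intro hc
  rw [expv_inj] at hc
  exact h s t (Nat.le_of_lt_succ (Finset.mem_range.mp hs)) (Nat.le_of_lt_succ (Finset.mem_range.mp ht))
    ⟨hc.1, hc.2.2.1, hc.2.2.2⟩

lemma coeff_ww_pow_single (n m1 m3 m4 s0 t0 : ℕ) (hs0 : s0 ≤ n) (ht0 : t0 ≤ n)
    (heq : 2 * s0 + t0 = m1 ∧ (n - s0) + 2 * (n - t0) = m3 ∧ (n - s0) + t0 = m4)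
    (huniq : ∀ s t : ℕ, s ≤ n → t ≤ n →
      (2 * s + t = m1 ∧ (n - s) + 2 * (n - t) = m3 ∧ (n - s) + t = m4) → s = s0 ∧ t = t0) :
    MvPolynomial.coeff (expv m1 0 m3 m4) ((ww k) ^ n)
      = (-1) ^ (n - s0) * ((n.choose s0 : k) * (n.choose t0 : k)) := by
  rw [coeff_ww_pow]
  rw [Finset.sum_eq_single s0]
  · rw [Finset.sum_eq_single t0]
    · rw [if_pos]
      rw [expv_inj]
      exact ⟨heq.1, rfl, heq.2.1, heq.2.2⟩
    · intro t ht hne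
      rw [if_neg]
      intro hc
      rw [expv_inj] at hc
      exact hne (huniq s0 t hs0 (Nat.le_of_lt_succ (Finset.mem_range.mp ht))
        ⟨hc.1, hc.2.2.1, hc.2.2.2⟩).2
    · intro hcon
      exact absurd (Finset.mem_range.mpr (Nat.lt_succ_of_le ht0)) hcon
  · intro s hs hne
    refine Finset.sum_eq_zero fun t ht => ?_
    rw [if_neg]
    intro hc
    rw [expv_inj] at hc
    exact hne (huniq s t (Nat.le_of_lt_succ (Finset.mem_range.mp hs))
      (Nat.le_of_lt_succ (Finset.mem_range.mp ht)) ⟨hc.1, hc.2.2.1, hc.2.2.2⟩).1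
  · intro hcon
    exact absurd (Finset.mem_range.mpr (Nat.lt_succ_of_le hs0)) hcon


set_option synthInstance.maxHeartbeats 1000000 in
lemma kappa2_eq : kappa2 k = MvPolynomial.map (C : k →+* MvPolynomial (Fin 3) k) (kap0 k) := by
  unfold kappa2 kap0
  simp only [map_sub, map_add, map_mul, map_pow, map_ofNat, MvPolynomial.map_X]

lemma pi3_comp_C : (pi3 k).comp (C : k →+* MvPolynomial (Fin 3) k) = Polynomial.C := by
  ext x
  simp

set_option synthInstance.maxHeartbeats 1000000 in
lemma map_pi3_vpl : MvPolynomial.map (pi3 k) (vpl2 k) = C Polynomial.X * X 1 + X 3 := by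
  unfold vpl2
  rw [map_add, map_add, map_add, map_mul, map_mul, map_mul, MvPolynomial.map_C,
    MvPolynomial.map_C, MvPolynomial.map_C, MvPolynomial.map_X, MvPolynomial.map_X,
    MvPolynomial.map_X, MvPolynomial.map_X, pi3_X0, pi3_X1, pi3_X2]
  simp

lemma map_pi3_kappa : MvPolynomial.map (pi3 k) (kappa2 k) = MvPolynomial.map Polynomial.C (kap0 k) := by
  rw [kappa2_eq, MvPolynomial.map_map, pi3_comp_C]

lemma coeff_X1X3_mul {A : Type*} [CommRing A] (f : MvPolynomial (Fin 4) A) (j d i1 i2 i3 i4 : ℕ) :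
    MvPolynomial.coeff (expv i1 i2 i3 i4) (X 1 ^ j * X 3 ^ d * f)
      = if j ≤ i2 ∧ d ≤ i4 then MvPolynomial.coeff (expv i1 (i2 - j) i3 (i4 - d)) f else 0 := by
  rw [X_pow_eq_monomial, X_pow_eq_monomial, monomial_mul, one_mul, coeff_monomial_mul']
  have hcond : (Finsupp.single (1 : Fin 4) j + Finsupp.single 3 d ≤ expv i1 i2 i3 i4)
      ↔ (j ≤ i2 ∧ d ≤ i4) := by
    rw [Finsupp.le_def]
    constructor
    · intro h
      constructor
      · simpa [expv_apply, Finsupp.single_apply] using h 1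
      · simpa [expv_apply, Finsupp.single_apply] using h 3
    · rintro ⟨h1, h2⟩ x
      fin_cases x <;> simp [expv_apply, Finsupp.single_apply, h1, h2]
  have hsub : expv i1 i2 i3 i4 - (Finsupp.single 1 j + Finsupp.single 3 d)
      = expv i1 (i2 - j) i3 (i4 - d) := by
    ext x
    fin_cases x <;> simp [expv_apply, Finsupp.single_apply, Finsupp.tsub_apply]
  rw [hsub]
  exact if_congr hcond (one_mul _) rfl

lemma pi3_cc2_eq (p i1 i2 i3 i4 : ℕ) :
    pi3 k (cc2 k p i1 i2 i3 i4)
      = ∑ j ∈ Finset.range ((p - 1) + 1),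
          Polynomial.C ((((p - 1).choose j : ℕ) : k) *
            MvPolynomial.coeff (expv i1 i2 i3 i4) (X 1 ^ j * X 3 ^ ((p - 1) - j) * (kap0 k) ^ (p - 1)))
          * Polynomial.X ^ j := by
  unfold cc2
  rw [← MvPolynomial.coeff_map, map_pow, map_mul, map_pi3_vpl, map_pi3_kappa, mul_pow, add_pow,
    Finset.sum_mul, MvPolynomial.coeff_sum]
  refine Finset.sum_congr rfl fun j hj => ?_
  have hterm : (C Polynomial.X * X 1) ^ j * X 3 ^ ((p - 1) - j) * ((p - 1).choose j : MvPolynomial (Fin 4) (Polynomial k))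
        * (MvPolynomial.map Polynomial.C (kap0 k)) ^ (p - 1)
      = C (Polynomial.X ^ j * ((p - 1).choose j : Polynomial k))
        * MvPolynomial.map Polynomial.C (X 1 ^ j * X 3 ^ ((p - 1) - j) * (kap0 k) ^ (p - 1)) := by
    simp only [map_mul, map_pow, MvPolynomial.map_X, C_eq_coe_nat]
    ring
  rw [hterm, coeff_C_mul, MvPolynomial.coeff_map, Polynomial.C_mul, Polynomial.C_eq_natCast]
  ring


/-- Master formula: coefficients of `pi3 (cc2 ...)`. -/
lemma coeff_pi3_cc2 (p i1 i2 i3 i4 t : ℕ) :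
    (pi3 k (cc2 k p i1 i2 i3 i4)).coeff t
      = if t ≤ p - 1 ∧ t ≤ i2 ∧ (p - 1) - t ≤ i4
        then (((p - 1).choose t : ℕ) : k) *
          MvPolynomial.coeff (expv i1 (i2 - t) i3 (i4 - ((p - 1) - t))) ((kap0 k) ^ (p - 1))
        else 0 := by
  rw [pi3_cc2_eq, Polynomial.finset_sum_coeff]
  have hco : ∀ j ∈ Finset.range ((p - 1) + 1),
      (Polynomial.C ((((p - 1).choose j : ℕ) : k) *
        MvPolynomial.coeff (expv i1 i2 i3 i4) (X 1 ^ j * X 3 ^ ((p - 1) - j) * (kap0 k) ^ (p - 1)))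
        * Polynomial.X ^ j).coeff t
      = if j = t then ((((p - 1).choose j : ℕ) : k) *
          MvPolynomial.coeff (expv i1 i2 i3 i4) (X 1 ^ j * X 3 ^ ((p - 1) - j) * (kap0 k) ^ (p - 1)))
        else 0 := by
    intro j _
    rw [Polynomial.coeff_C_mul_X_pow]
    exact if_congr eq_comm rfl rfl
  rw [Finset.sum_congr rfl hco, Finset.sum_ite_eq' (Finset.range ((p - 1) + 1))]
  by_cases ht : t ≤ p - 1
  · rw [if_pos (Finset.mem_range.mpr (Nat.lt_succ_of_le ht))]
    rw [coeff_X1X3_mul]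
    by_cases h2 : t ≤ i2 ∧ (p - 1) - t ≤ i4
    · rw [if_pos h2, if_pos ⟨ht, h2.1, h2.2⟩]
    · rw [if_neg h2, mul_zero, if_neg (by tauto)]
  · rw [if_neg (by simpa using fun h => ht (Nat.lt_succ_iff.mp h)), if_neg (by tauto)]


def iota : MvPolynomial (Fin 2) k →+* MvPolynomial (Fin 3) k :=
  (rename (![0, 2] : Fin 2 → Fin 3)).toRingHom

lemma degreeOf_iota (y : MvPolynomial (Fin 2) k) :
    MvPolynomial.degreeOf 1 (iota k y) = 0 := by
  rw [MvPolynomial.degreeOf_eq_sup]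
  refine Nat.le_zero.mp (Finset.sup_le fun m hm => ?_)
  by_contra h
  have h1 : (1 : Fin 3) ∈ (iota k y).vars :=
    (mem_vars _).mpr ⟨m, hm, Finsupp.mem_support_iff.mpr (by omega)⟩
  have h2 := vars_rename (![0, 2] : Fin 2 → Fin 3) y h1
  rw [Finset.mem_image] at h2
  obtain ⟨x, _, hx⟩ := h2
  fin_cases x <;> simp_all

set_option maxHeartbeats 1000000 in
set_option synthInstance.maxHeartbeats 1000000 in
/-- The `b`-degree bound for `cc2`. -/
lemma degreeOf_b_cc2 (p i1 i2 i3 i4 : ℕ) :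
    MvPolynomial.degreeOf 1 (cc2 k p i1 i2 i3 i4) ≤ min (p - 1) i2 := by
  classical
  set n := p - 1 with hn
  set b : MvPolynomial (Fin 3) k := X 1 with hb
  set vt : MvPolynomial (Fin 4) (MvPolynomial (Fin 3) k) := C (X 0) * X 0 + C (X 2) * X 2 + X 3 with hvt
  have hv : vpl2 k = C (X 1) * X 1 + vt := by unfold vpl2; rw [hvt]; ring
  have hexp : cc2 k p i1 i2 i3 i4
      = ∑ j ∈ Finset.range (n + 1),
          (X 1 : MvPolynomial (Fin 3) k) ^ j * ((n.choose j : MvPolynomial (Fin 3) k)) *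
            MvPolynomial.coeff (expv i1 i2 i3 i4)
              (X 1 ^ j * (vt ^ (n - j) * (kappa2 k) ^ n)) := by
    unfold cc2
    rw [mul_pow, hv, add_pow, Finset.sum_mul, MvPolynomial.coeff_sum]
    refine Finset.sum_congr rfl fun j hj => ?_
    have hterm : (C (X 1) * X 1) ^ j * vt ^ (n - j) * ((n.choose j : ℕ) : MvPolynomial (Fin 4) (MvPolynomial (Fin 3) k))
          * (kappa2 k) ^ n
        = C ((X 1 : MvPolynomial (Fin 3) k) ^ j * ((n.choose j : ℕ) : MvPolynomial (Fin 3) k)) *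
            (X 1 ^ j * (vt ^ (n - j) * (kappa2 k) ^ n)) := by
      simp only [mul_pow, map_mul, map_pow, C_eq_coe_nat]
      ring
    rw [hterm, coeff_C_mul]
  rw [hexp]
  refine le_trans (degreeOf_sum_le _ _ _) (Finset.sup_le fun j hj => ?_)
  by_cases hji : j ≤ i2
  · have hj1 : MvPolynomial.degreeOf 1 ((X 1 : MvPolynomial (Fin 3) k) ^ j) ≤ j := by
      refine le_trans (degreeOf_pow_le _ _ _) ?_
      rw [degreeOf_X]
      simp
    have hj2 : MvPolynomial.degreeOf 1 ((n.choose j : MvPolynomial (Fin 3) k)) = 0 := by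
      rw [← C_eq_coe_nat, degreeOf_C]
    have hj3 : MvPolynomial.degreeOf 1
        (MvPolynomial.coeff (expv i1 i2 i3 i4) (X 1 ^ j * (vt ^ (n - j) * (kappa2 k) ^ n))) = 0 := by
      have hcomp : (iota k).comp (C : k →+* MvPolynomial (Fin 2) k)
          = (C : k →+* MvPolynomial (Fin 3) k) := by
        refine RingHom.ext fun x => ?_
        simp [iota, rename_C]
      have hi0 : iota k (X 0) = X 0 := by simp [iota, rename_X]
      have hi1 : iota k (X 1) = X 2 := by simp [iota, rename_X]
      have himg : MvPolynomial.map (iota k)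
            (X 1 ^ j * ((C (X 0) * X 0 + C (X 1) * X 2 + X 3) ^ (n - j)
              * (MvPolynomial.map (C : k →+* MvPolynomial (Fin 2) k) (kap0 k)) ^ n))
          = X 1 ^ j * (vt ^ (n - j) * (kappa2 k) ^ n) := by
        rw [map_mul, map_mul, map_pow, map_pow, map_pow, MvPolynomial.map_X, map_add, map_add,
          map_mul, map_mul, MvPolynomial.map_X, MvPolynomial.map_X, MvPolynomial.map_X,
          MvPolynomial.map_C, MvPolynomial.map_C, MvPolynomial.map_map, hcomp, ← kappa2_eq, hvt,
          hi0, hi1]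
      rw [← himg, MvPolynomial.coeff_map]
      exact degreeOf_iota k _
    have h4 := degreeOf_mul_le (1 : Fin 3)
      ((X 1 : MvPolynomial (Fin 3) k) ^ j * ((n.choose j : MvPolynomial (Fin 3) k)))
      (MvPolynomial.coeff (expv i1 i2 i3 i4) (X 1 ^ j * (vt ^ (n - j) * (kappa2 k) ^ n)))
    have h5 := degreeOf_mul_le (1 : Fin 3) ((X 1 : MvPolynomial (Fin 3) k) ^ j)
      ((n.choose j : MvPolynomial (Fin 3) k))
    have hmem := Finset.mem_range.mp hj
    omega
  · have hz : MvPolynomial.coeff (expv i1 i2 i3 i4) (X 1 ^ j * (vt ^ (n - j) * (kappa2 k) ^ n)) = 0 := by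
      rw [X_pow_eq_monomial, coeff_monomial_mul', if_neg]
      rw [Finsupp.single_le_iff]
      rw [expv_apply]
      simpa using hji
    rw [hz, mul_zero]
    simp


section Kvals

lemma K0val (p r : ℕ) (hpr : p = 6 * r + 5) : MvPolynomial.coeff (expv (2*p-2) 0 (p-1) (p-1)) ((kap0 k) ^ (p-1)) = 0 := by
  have h0 := coeff_ww_pow_zero k (p-1) (2*p-2) (p-1) (p-1)
    (fun s t hs ht hc => by subst hpr; omega)
  rw [coeff_kap0_pow k _ _ (by simp [expv_apply]), h0, mul_zero]

lemma K1val (p r : ℕ) (hpr : p = 6 * r + 5) : MvPolynomial.coeff (expv (p-2) 0 (p-1) (2*p-1)) ((kap0 k) ^ (p-1)) = 0 := by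
  have h0 := coeff_ww_pow_zero k (p-1) (p-2) (p-1) (2*p-1)
    (fun s t hs ht hc => by subst hpr; omega)
  rw [coeff_kap0_pow k _ _ (by simp [expv_apply]), h0, mul_zero]

lemma K3val (p r : ℕ) (hpr : p = 6 * r + 5) : MvPolynomial.coeff (expv (2*p-1) 0 (p-1) (p-2)) ((kap0 k) ^ (p-1)) = 0 := by
  have h0 := coeff_ww_pow_zero k (p-1) (2*p-1) (p-1) (p-2)
    (fun s t hs ht hc => by subst hpr; omega)
  rw [coeff_kap0_pow k _ _ (by simp [expv_apply]), h0, mul_zero]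

lemma K5val (p r : ℕ) (hpr : p = 6 * r + 5) : MvPolynomial.coeff (expv (p-1) 0 (2*p-1) (p-2)) ((kap0 k) ^ (p-1)) = 0 := by
  have h0 := coeff_ww_pow_zero k (p-1) (p-1) (2*p-1) (p-2)
    (fun s t hs ht hc => by subst hpr; omega)
  rw [coeff_kap0_pow k _ _ (by simp [expv_apply]), h0, mul_zero]

lemma K7val (p r : ℕ) (hpr : p = 6 * r + 5) : MvPolynomial.coeff (expv (p-1) 0 (p-2) (2*p-1)) ((kap0 k) ^ (p-1)) = 0 := by
  have h0 := coeff_ww_pow_zero k (p-1) (p-1) (p-2) (2*p-1)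
    (fun s t hs ht hc => by subst hpr; omega)
  rw [coeff_kap0_pow k _ _ (by simp [expv_apply]), h0, mul_zero]

lemma K8val (p r : ℕ) (hpr : p = 6 * r + 5) : MvPolynomial.coeff (expv (p-1) 0 (2*p-2) (p-1)) ((kap0 k) ^ (p-1)) = 0 := by
  have h0 := coeff_ww_pow_zero k (p-1) (p-1) (2*p-2) (p-1)
    (fun s t hs ht hc => by subst hpr; omega)
  rw [coeff_kap0_pow k _ _ (by simp [expv_apply]), h0, mul_zero]

lemma K4val (p r : ℕ) (hpr : p = 6 * r + 5) (hp : p.Prime) [CharP k p] : MvPolynomial.coeff (expv (p-1) 0 (p-1) (2*p-2)) ((kap0 k) ^ (p-1)) = 1 := by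
  have h0 := coeff_ww_pow_single k (p-1) (p-1) (p-1) (2*p-2) 0 (p-1)
    (by omega) (by omega) (by subst hpr; omega)
    (fun s t hs ht hc => by subst hpr; omega)
  rw [coeff_kap0_pow k _ _ (by simp [expv_apply]), h0,
    four_pow k p hp (by omega), one_mul, Nat.sub_zero, Nat.choose_self, Nat.choose_zero_right]
  have heven : Even (p - 1) := by subst hpr; exact ⟨3*r+2, by omega⟩
  rw [heven.neg_one_pow]
  norm_num

lemma K2val (p r : ℕ) (hpr : p = 6 * r + 5) (hp : p.Prime) [CharP k p] : MvPolynomial.coeff (expv (p-2) 0 (2*p-1) (p-1)) ((kap0 k) ^ (p-1)) = -1 := by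
  have h0 := coeff_ww_pow_single k (p-1) (p-2) (2*p-1) (p-1) (2*r+1) (2*r+1)
    (by omega) (by omega) (by subst hpr; omega)
    (fun s t hs ht hc => by subst hpr; omega)
  rw [coeff_kap0_pow k _ _ (by simp [expv_apply]), h0,
    four_pow k p hp (by omega), one_mul]
  have hch : (((p - 1).choose (2*r+1) : ℕ) : k) = (-1) ^ (2*r+1) :=
    choose_p_sub_one k p hp (2*r+1) (by omega)
  rw [hch]
  have hodd : Odd (p - 1 - (2*r+1)) := by subst hpr; exact ⟨2*r+1, by omega⟩
  rw [hodd.neg_one_pow, Odd.neg_one_pow ⟨r, by omega⟩]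
  ring

lemma K6val (p r : ℕ) (hpr : p = 6 * r + 5) (hp : p.Prime) [CharP k p] : MvPolynomial.coeff (expv (2*p-1) 0 (p-2) (p-1)) ((kap0 k) ^ (p-1)) = -1 := by
  have h0 := coeff_ww_pow_single k (p-1) (2*p-1) (p-2) (p-1) (4*r+3) (4*r+3)
    (by omega) (by omega) (by subst hpr; omega)
    (fun s t hs ht hc => by subst hpr; omega)
  rw [coeff_kap0_pow k _ _ (by simp [expv_apply]), h0,
    four_pow k p hp (by omega), one_mul]
  have hch : (((p - 1).choose (4*r+3) : ℕ) : k) = (-1) ^ (4*r+3) :=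
    choose_p_sub_one k p hp (4*r+3) (by omega)
  rw [hch]
  have hodd : Odd (p - 1 - (4*r+3)) := by subst hpr; exact ⟨r, by omega⟩
  rw [hodd.neg_one_pow, Odd.neg_one_pow ⟨2*r+1, by omega⟩]
  ring

end Kvals


lemma natDegree_pi3_cc2 (p i1 i2 i3 i4 : ℕ) :
    (pi3 k (cc2 k p i1 i2 i3 i4)).natDegree ≤ min (p - 1) i2 := by
  rw [Polynomial.natDegree_le_iff_coeff_eq_zero]
  intro N hN
  rw [coeff_pi3_cc2, if_neg (by omega)]

lemma deg_entry_ac (j : Fin 3) (hj : (1 : Fin 3) ≠ j) (p A B C D A' B' C' D' : ℕ) :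
    MvPolynomial.degreeOf 1 (cc2 k p A B C D - X j ^ p * cc2 k p A' B' C' D')
      ≤ max (min (p - 1) B) (min (p - 1) B') := by
  refine le_trans (degreeOf_sub_le _ _ _) (max_le_max (degreeOf_b_cc2 k p A B C D) ?_)
  refine le_trans (degreeOf_mul_le _ _ _) ?_
  have hX : MvPolynomial.degreeOf 1 ((X j : MvPolynomial (Fin 3) k) ^ p) = 0 := by
    refine Nat.le_zero.mp (le_trans (degreeOf_pow_le _ _ _) ?_)
    rw [degreeOf_X, if_neg hj, Nat.mul_zero]
  have h2 := degreeOf_b_cc2 k p A' B' C' D'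
  omega

lemma deg_entry_b (p A B C D A' B' C' D' : ℕ) :
    MvPolynomial.degreeOf 1 (cc2 k p A B C D - X 1 ^ p * cc2 k p A' B' C' D')
      ≤ max (min (p - 1) B) (p + min (p - 1) B') := by
  refine le_trans (degreeOf_sub_le _ _ _) (max_le_max (degreeOf_b_cc2 k p A B C D) ?_)
  refine le_trans (degreeOf_mul_le _ _ _) ?_
  have hX : MvPolynomial.degreeOf 1 ((X 1 : MvPolynomial (Fin 3) k) ^ p) ≤ p := by
    refine le_trans (degreeOf_pow_le _ _ _) ?_
    rw [degreeOf_X, if_pos rfl, Nat.mul_one]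
  have h2 := degreeOf_b_cc2 k p A' B' C' D'
  omega

lemma deg_triple (f g h : MvPolynomial (Fin 3) k) (a b c : ℕ)
    (hf : MvPolynomial.degreeOf 1 f ≤ a) (hg : MvPolynomial.degreeOf 1 g ≤ b)
    (hh : MvPolynomial.degreeOf 1 h ≤ c) :
    MvPolynomial.degreeOf 1 (f * g * h) ≤ a + b + c := by
  refine le_trans (degreeOf_mul_le _ _ _) ?_
  have h1 := degreeOf_mul_le (1 : Fin 3) f g
  omega

lemma coeff_triple (f g h : Polynomial k) (a b c : ℕ)
    (hf : f.natDegree ≤ a) (hg : g.natDegree ≤ b) (hh : h.natDegree ≤ c) :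
    (f * g * h).coeff (a + b + c) = f.coeff a * g.coeff b * h.coeff c := by
  rw [Polynomial.coeff_mul_add_eq_of_natDegree_le
      (le_trans (Polynomial.natDegree_mul_le) (add_le_add hf hg)) hh,
    Polynomial.coeff_mul_add_eq_of_natDegree_le hf hg]

end Stmt2Aux

set_option maxHeartbeats 4000000 in
set_option synthInstance.maxHeartbeats 1000000 in
/-- For `p ≡ 5 (mod 6)` prime and `k` of characteristic `p`, the
determinant of `H_X`, viewed as a polynomial in the variable `b = X 1`, has degree
exactly `4(p−1)`. -/
theorem stmt2 (p : ℕ) (hp : p.Prime) (hp5 : p % 6 = 5) [CharP k p] :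
    MvPolynomial.degreeOf (1 : Fin 3) (HX2 k p).det = 4 * (p - 1) := by
  classical
  open Stmt2Aux in
  obtain ⟨r, hpr⟩ : ∃ r, p = 6 * r + 5 := ⟨p / 6, by omega⟩
  -- entries of the matrix
  have e00 : HX2 k p 0 0 = cc2 k p (2*p-2) (p-1) (p-1) (p-1) - X 0 ^ p * cc2 k p (p-2) (p-1) (p-1) (2*p-1) := by
    simp [HX2]
  have e01 : HX2 k p 0 1 = cc2 k p (p-2) (2*p-1) (p-1) (p-1) - X 1 ^ p * cc2 k p (p-2) (p-1) (p-1) (2*p-1) := by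
    simp [HX2]
  have e02 : HX2 k p 0 2 = cc2 k p (p-2) (p-1) (2*p-1) (p-1) - X 2 ^ p * cc2 k p (p-2) (p-1) (p-1) (2*p-1) := by
    simp [HX2]
  have e10 : HX2 k p 1 0 = cc2 k p (2*p-1) (p-2) (p-1) (p-1) - X 0 ^ p * cc2 k p (p-1) (p-2) (p-1) (2*p-1) := by
    simp [HX2]
  have e11 : HX2 k p 1 1 = cc2 k p (p-1) (2*p-2) (p-1) (p-1) - X 1 ^ p * cc2 k p (p-1) (p-2) (p-1) (2*p-1) := by
    simp [HX2]
  have e12 : HX2 k p 1 2 = cc2 k p (p-1) (p-2) (2*p-1) (p-1) - X 2 ^ p * cc2 k p (p-1) (p-2) (p-1) (2*p-1) := by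
    simp [HX2]
  have e20 : HX2 k p 2 0 = cc2 k p (2*p-1) (p-1) (p-2) (p-1) - X 0 ^ p * cc2 k p (p-1) (p-1) (p-2) (2*p-1) := by
    simp [HX2]
  have e21 : HX2 k p 2 1 = cc2 k p (p-1) (2*p-1) (p-2) (p-1) - X 1 ^ p * cc2 k p (p-1) (p-1) (p-2) (2*p-1) := by
    simp [HX2]
  have e22 : HX2 k p 2 2 = cc2 k p (p-1) (p-1) (2*p-2) (p-1) - X 2 ^ p * cc2 k p (p-1) (p-1) (p-2) (2*p-1) := by
    simp [HX2]
  have hppos : p ≠ 0 := by omega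
  -- π images of entries
  have pe00 : pi3 k (HX2 k p 0 0) = pi3 k (cc2 k p (2*p-2) (p-1) (p-1) (p-1)) := by
    rw [e00, map_sub, map_mul, map_pow, Stmt2Aux.pi3_X0, zero_pow hppos, zero_mul, sub_zero]
  have pe02 : pi3 k (HX2 k p 0 2) = pi3 k (cc2 k p (p-2) (p-1) (2*p-1) (p-1)) := by
    rw [e02, map_sub, map_mul, map_pow, Stmt2Aux.pi3_X2, zero_pow hppos, zero_mul, sub_zero]
  have pe10 : pi3 k (HX2 k p 1 0) = pi3 k (cc2 k p (2*p-1) (p-2) (p-1) (p-1)) := by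
    rw [e10, map_sub, map_mul, map_pow, Stmt2Aux.pi3_X0, zero_pow hppos, zero_mul, sub_zero]
  have pe12 : pi3 k (HX2 k p 1 2) = pi3 k (cc2 k p (p-1) (p-2) (2*p-1) (p-1)) := by
    rw [e12, map_sub, map_mul, map_pow, Stmt2Aux.pi3_X2, zero_pow hppos, zero_mul, sub_zero]
  have pe20 : pi3 k (HX2 k p 2 0) = pi3 k (cc2 k p (2*p-1) (p-1) (p-2) (p-1)) := by
    rw [e20, map_sub, map_mul, map_pow, Stmt2Aux.pi3_X0, zero_pow hppos, zero_mul, sub_zero]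
  have pe22 : pi3 k (HX2 k p 2 2) = pi3 k (cc2 k p (p-1) (p-1) (2*p-2) (p-1)) := by
    rw [e22, map_sub, map_mul, map_pow, Stmt2Aux.pi3_X2, zero_pow hppos, zero_mul, sub_zero]
  have pe01 : pi3 k (HX2 k p 0 1)
      = pi3 k (cc2 k p (p-2) (2*p-1) (p-1) (p-1)) - Polynomial.X ^ p * pi3 k (cc2 k p (p-2) (p-1) (p-1) (2*p-1)) := by
    rw [e01, map_sub, map_mul, map_pow, Stmt2Aux.pi3_X1]
  have pe11 : pi3 k (HX2 k p 1 1)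
      = pi3 k (cc2 k p (p-1) (2*p-2) (p-1) (p-1)) - Polynomial.X ^ p * pi3 k (cc2 k p (p-1) (p-2) (p-1) (2*p-1)) := by
    rw [e11, map_sub, map_mul, map_pow, Stmt2Aux.pi3_X1]
  have pe21 : pi3 k (HX2 k p 2 1)
      = pi3 k (cc2 k p (p-1) (2*p-1) (p-2) (p-1)) - Polynomial.X ^ p * pi3 k (cc2 k p (p-1) (p-1) (p-2) (2*p-1)) := by
    rw [e21, map_sub, map_mul, map_pow, Stmt2Aux.pi3_X1]
  -- natDegree bounds for π-entries
  have nd00 : (pi3 k (HX2 k p 0 0)).natDegree ≤ p - 1 := by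
    rw [pe00]; exact le_trans (Stmt2Aux.natDegree_pi3_cc2 k p _ _ _ _) (by omega)
  have nd02 : (pi3 k (HX2 k p 0 2)).natDegree ≤ p - 1 := by
    rw [pe02]; exact le_trans (Stmt2Aux.natDegree_pi3_cc2 k p _ _ _ _) (by omega)
  have nd10 : (pi3 k (HX2 k p 1 0)).natDegree ≤ p - 2 := by
    rw [pe10]; exact le_trans (Stmt2Aux.natDegree_pi3_cc2 k p _ _ _ _) (by omega)
  have nd12 : (pi3 k (HX2 k p 1 2)).natDegree ≤ p - 2 := by
    rw [pe12]; exact le_trans (Stmt2Aux.natDegree_pi3_cc2 k p _ _ _ _) (by omega)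
  have nd20 : (pi3 k (HX2 k p 2 0)).natDegree ≤ p - 1 := by
    rw [pe20]; exact le_trans (Stmt2Aux.natDegree_pi3_cc2 k p _ _ _ _) (by omega)
  have nd22 : (pi3 k (HX2 k p 2 2)).natDegree ≤ p - 1 := by
    rw [pe22]; exact le_trans (Stmt2Aux.natDegree_pi3_cc2 k p _ _ _ _) (by omega)
  have ndsub : ∀ (A B C D A' B' C' D' : ℕ),
      (pi3 k (cc2 k p A B C D) - Polynomial.X ^ p * pi3 k (cc2 k p A' B' C' D')).natDegree
        ≤ max (min (p-1) B) (p + min (p-1) B') := by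
    intro A B C D A' B' C' D'
    refine le_trans (Polynomial.natDegree_sub_le _ _) (max_le_max (Stmt2Aux.natDegree_pi3_cc2 k p _ _ _ _) ?_)
    refine le_trans (Polynomial.natDegree_mul_le) ?_
    have h1 : (Polynomial.X ^ p : Polynomial k).natDegree ≤ p := by
      simpa using Polynomial.natDegree_X_pow_le (R := k) p
    have h2 := Stmt2Aux.natDegree_pi3_cc2 k p A' B' C' D'
    omega
  have nd01 : (pi3 k (HX2 k p 0 1)).natDegree ≤ 2*p - 1 := by
    rw [pe01]; exact le_trans (ndsub _ _ _ _ _ _ _ _) (by omega)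
  have nd11 : (pi3 k (HX2 k p 1 1)).natDegree ≤ 2*p - 2 := by
    rw [pe11]; exact le_trans (ndsub _ _ _ _ _ _ _ _) (by omega)
  have nd21 : (pi3 k (HX2 k p 2 1)).natDegree ≤ 2*p - 1 := by
    rw [pe21]; exact le_trans (ndsub _ _ _ _ _ _ _ _) (by omega)
  -- top coefficients
  have c00 : (pi3 k (HX2 k p 0 0)).coeff (p-1) = 0 := by
    rw [pe00, Stmt2Aux.coeff_pi3_cc2, if_pos (by omega)]
    simp only [Nat.sub_self, Nat.sub_zero, Nat.choose_self, Nat.cast_one, one_mul]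
    exact Stmt2Aux.K0val k p r hpr
  have c02 : (pi3 k (HX2 k p 0 2)).coeff (p-1) = -1 := by
    rw [pe02, Stmt2Aux.coeff_pi3_cc2, if_pos (by omega)]
    simp only [Nat.sub_self, Nat.sub_zero, Nat.choose_self, Nat.cast_one, one_mul]
    exact Stmt2Aux.K2val k p r hpr hp
  have c20 : (pi3 k (HX2 k p 2 0)).coeff (p-1) = -1 := by
    rw [pe20, Stmt2Aux.coeff_pi3_cc2, if_pos (by omega)]
    simp only [Nat.sub_self, Nat.sub_zero, Nat.choose_self, Nat.cast_one, one_mul]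
    exact Stmt2Aux.K6val k p r hpr hp
  have c22 : (pi3 k (HX2 k p 2 2)).coeff (p-1) = 0 := by
    rw [pe22, Stmt2Aux.coeff_pi3_cc2, if_pos (by omega)]
    simp only [Nat.sub_self, Nat.sub_zero, Nat.choose_self, Nat.cast_one, one_mul]
    exact Stmt2Aux.K8val k p r hpr
  have hsub1 : p - 1 - (p - 2) = 1 := by omega
  have hsub2 : p - 1 - 1 = p - 2 := by omega
  have hsub3 : 2*p - 1 - 1 = 2*p - 2 := by omega
  have c10 : (pi3 k (HX2 k p 1 0)).coeff (p-2) = 0 := by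
    rw [pe10, Stmt2Aux.coeff_pi3_cc2, if_pos (by omega)]
    rw [Nat.sub_self, hsub1, hsub2, Stmt2Aux.K3val k p r hpr, mul_zero]
  have c12 : (pi3 k (HX2 k p 1 2)).coeff (p-2) = 0 := by
    rw [pe12, Stmt2Aux.coeff_pi3_cc2, if_pos (by omega)]
    rw [Nat.sub_self, hsub1, hsub2, Stmt2Aux.K5val k p r hpr, mul_zero]
  have hXpow1 : ∀ f : Polynomial k, (Polynomial.X ^ p * f).coeff (2*p-1) = f.coeff (p-1) := by
    intro f
    rw [show 2*p-1 = (p-1) + p by omega]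
    exact Polynomial.coeff_X_pow_mul f p (p-1)
  have hXpow2 : ∀ f : Polynomial k, (Polynomial.X ^ p * f).coeff (2*p-2) = f.coeff (p-2) := by
    intro f
    rw [show 2*p-2 = (p-2) + p by omega]
    exact Polynomial.coeff_X_pow_mul f p (p-2)
  have c01 : (pi3 k (HX2 k p 0 1)).coeff (2*p-1) = 0 := by
    rw [pe01, Polynomial.coeff_sub]
    have h1 : (pi3 k (cc2 k p (p-2) (2*p-1) (p-1) (p-1))).coeff (2*p-1) = 0 := by
      rw [Stmt2Aux.coeff_pi3_cc2, if_neg (by omega)]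
    have h2 : (Polynomial.X ^ p * pi3 k (cc2 k p (p-2) (p-1) (p-1) (2*p-1))).coeff (2*p-1) = 0 := by
      rw [hXpow1, Stmt2Aux.coeff_pi3_cc2, if_pos (by omega)]
      simp only [Nat.sub_self, Nat.sub_zero, Nat.choose_self, Nat.cast_one, one_mul]
      exact Stmt2Aux.K1val k p r hpr
    rw [h1, h2, sub_zero]
  have c21 : (pi3 k (HX2 k p 2 1)).coeff (2*p-1) = 0 := by
    rw [pe21, Polynomial.coeff_sub]
    have h1 : (pi3 k (cc2 k p (p-1) (2*p-1) (p-2) (p-1))).coeff (2*p-1) = 0 := by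
      rw [Stmt2Aux.coeff_pi3_cc2, if_neg (by omega)]
    have h2 : (Polynomial.X ^ p * pi3 k (cc2 k p (p-1) (p-1) (p-2) (2*p-1))).coeff (2*p-1) = 0 := by
      rw [hXpow1, Stmt2Aux.coeff_pi3_cc2, if_pos (by omega)]
      simp only [Nat.sub_self, Nat.sub_zero, Nat.choose_self, Nat.cast_one, one_mul]
      exact Stmt2Aux.K7val k p r hpr
    rw [h1, h2, sub_zero]
  have c11 : (pi3 k (HX2 k p 1 1)).coeff (2*p-2) = 1 := by
    rw [pe11, Polynomial.coeff_sub]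
    have h1 : (pi3 k (cc2 k p (p-1) (2*p-2) (p-1) (p-1))).coeff (2*p-2) = 0 := by
      rw [Stmt2Aux.coeff_pi3_cc2, if_neg (by omega)]
    have h2 : (Polynomial.X ^ p * pi3 k (cc2 k p (p-1) (p-2) (p-1) (2*p-1))).coeff (2*p-2) = -1 := by
      rw [hXpow2, Stmt2Aux.coeff_pi3_cc2, if_pos (by omega)]
      rw [Nat.sub_self, hsub1, hsub3, Stmt2Aux.K4val k p r hpr hp, mul_one]
      have hch : (((p - 1).choose (p-2) : ℕ) : k) = (-1) ^ (p-2) :=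
        Stmt2Aux.choose_p_sub_one k p hp (p-2) (by omega)
      rw [hch, Odd.neg_one_pow ⟨3*r+1, by omega⟩]
    rw [h1, h2, zero_sub, neg_neg]
  -- coefficient of the determinant image
  have hdet : pi3 k ((HX2 k p).det) = ((HX2 k p).map (pi3 k)).det := RingHom.map_det _ _
  have hco : (pi3 k ((HX2 k p).det)).coeff (4*(p-1)) = -1 := by
    rw [hdet, Matrix.det_fin_three]
    simp only [Matrix.map_apply]
    have t1 : (pi3 k (HX2 k p 0 0) * pi3 k (HX2 k p 1 1) * pi3 k (HX2 k p 2 2)).coeff (4*(p-1)) = 0 := by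
      rw [show 4*(p-1) = (p-1) + (2*p-2) + (p-1) by omega,
        Stmt2Aux.coeff_triple k _ _ _ _ _ _ nd00 nd11 nd22, c00]
      ring
    have t2 : (pi3 k (HX2 k p 0 0) * pi3 k (HX2 k p 1 2) * pi3 k (HX2 k p 2 1)).coeff (4*(p-1)) = 0 := by
      rw [show 4*(p-1) = (p-1) + (p-2) + (2*p-1) by omega,
        Stmt2Aux.coeff_triple k _ _ _ _ _ _ nd00 nd12 nd21, c00]
      ring
    have t3 : (pi3 k (HX2 k p 0 1) * pi3 k (HX2 k p 1 0) * pi3 k (HX2 k p 2 2)).coeff (4*(p-1)) = 0 := by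
      rw [show 4*(p-1) = (2*p-1) + (p-2) + (p-1) by omega,
        Stmt2Aux.coeff_triple k _ _ _ _ _ _ nd01 nd10 nd22, c01]
      ring
    have t4 : (pi3 k (HX2 k p 0 1) * pi3 k (HX2 k p 1 2) * pi3 k (HX2 k p 2 0)).coeff (4*(p-1)) = 0 := by
      rw [show 4*(p-1) = (2*p-1) + (p-2) + (p-1) by omega,
        Stmt2Aux.coeff_triple k _ _ _ _ _ _ nd01 nd12 nd20, c01]
      ring
    have t5 : (pi3 k (HX2 k p 0 2) * pi3 k (HX2 k p 1 0) * pi3 k (HX2 k p 2 1)).coeff (4*(p-1)) = 0 := by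
      rw [show 4*(p-1) = (p-1) + (p-2) + (2*p-1) by omega,
        Stmt2Aux.coeff_triple k _ _ _ _ _ _ nd02 nd10 nd21, c10]
      ring
    have t6 : (pi3 k (HX2 k p 0 2) * pi3 k (HX2 k p 1 1) * pi3 k (HX2 k p 2 0)).coeff (4*(p-1)) = 1 := by
      rw [show 4*(p-1) = (p-1) + (2*p-2) + (p-1) by omega,
        Stmt2Aux.coeff_triple k _ _ _ _ _ _ nd02 nd11 nd20, c02, c11, c20]
      ring
    rw [Polynomial.coeff_sub, Polynomial.coeff_add, Polynomial.coeff_add, Polynomial.coeff_sub,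
      Polynomial.coeff_sub, t1, t2, t3, t4, t5, t6]
    ring
  -- lower bound
  have hcoeffR : MvPolynomial.coeff (Finsupp.single 1 (4*(p-1))) ((HX2 k p).det) = -1 := by
    rw [← Stmt2Aux.coeff_pi3 k ((HX2 k p).det) (4*(p-1)), hco]
  have hmem : Finsupp.single (1 : Fin 3) (4*(p-1)) ∈ ((HX2 k p).det).support :=
    MvPolynomial.mem_support_iff.mpr (by rw [hcoeffR]; exact neg_ne_zero.mpr one_ne_zero)
  have hge : 4*(p-1) ≤ MvPolynomial.degreeOf 1 ((HX2 k p).det) := by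
    rw [MvPolynomial.degreeOf_eq_sup]
    have := Finset.le_sup (f := fun m : Fin 3 →₀ ℕ => m 1) hmem
    simpa using this
  -- upper bound
  have b00 : MvPolynomial.degreeOf 1 (HX2 k p 0 0) ≤ p-1 := by
    rw [e00]; exact le_trans (Stmt2Aux.deg_entry_ac k 0 (by decide) p _ _ _ _ _ _ _ _) (by omega)
  have b02 : MvPolynomial.degreeOf 1 (HX2 k p 0 2) ≤ p-1 := by
    rw [e02]; exact le_trans (Stmt2Aux.deg_entry_ac k 2 (by decide) p _ _ _ _ _ _ _ _) (by omega)
  have b10 : MvPolynomial.degreeOf 1 (HX2 k p 1 0) ≤ p-2 := by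
    rw [e10]; exact le_trans (Stmt2Aux.deg_entry_ac k 0 (by decide) p _ _ _ _ _ _ _ _) (by omega)
  have b12 : MvPolynomial.degreeOf 1 (HX2 k p 1 2) ≤ p-2 := by
    rw [e12]; exact le_trans (Stmt2Aux.deg_entry_ac k 2 (by decide) p _ _ _ _ _ _ _ _) (by omega)
  have b20 : MvPolynomial.degreeOf 1 (HX2 k p 2 0) ≤ p-1 := by
    rw [e20]; exact le_trans (Stmt2Aux.deg_entry_ac k 0 (by decide) p _ _ _ _ _ _ _ _) (by omega)
  have b22 : MvPolynomial.degreeOf 1 (HX2 k p 2 2) ≤ p-1 := by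
    rw [e22]; exact le_trans (Stmt2Aux.deg_entry_ac k 2 (by decide) p _ _ _ _ _ _ _ _) (by omega)
  have b01 : MvPolynomial.degreeOf 1 (HX2 k p 0 1) ≤ 2*p-1 := by
    rw [e01]; exact le_trans (Stmt2Aux.deg_entry_b k p _ _ _ _ _ _ _ _) (by omega)
  have b11 : MvPolynomial.degreeOf 1 (HX2 k p 1 1) ≤ 2*p-2 := by
    rw [e11]; exact le_trans (Stmt2Aux.deg_entry_b k p _ _ _ _ _ _ _ _) (by omega)
  have b21 : MvPolynomial.degreeOf 1 (HX2 k p 2 1) ≤ 2*p-1 := by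
    rw [e21]; exact le_trans (Stmt2Aux.deg_entry_b k p _ _ _ _ _ _ _ _) (by omega)
  have hle : MvPolynomial.degreeOf 1 ((HX2 k p).det) ≤ 4*(p-1) := by
    rw [Matrix.det_fin_three]
    have d1 := Stmt2Aux.deg_triple k _ _ _ _ _ _ b00 b11 b22
    have d2 := Stmt2Aux.deg_triple k _ _ _ _ _ _ b00 b12 b21
    have d3 := Stmt2Aux.deg_triple k _ _ _ _ _ _ b01 b10 b22
    have d4 := Stmt2Aux.deg_triple k _ _ _ _ _ _ b01 b12 b20
    have d5 := Stmt2Aux.deg_triple k _ _ _ _ _ _ b02 b10 b21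
    have d6 := Stmt2Aux.deg_triple k _ _ _ _ _ _ b02 b11 b20
    refine le_trans (degreeOf_sub_le _ _ _) (max_le ?_ (le_trans d6 (by omega)))
    refine le_trans (degreeOf_add_le _ _ _) (max_le ?_ (le_trans d5 (by omega)))
    refine le_trans (degreeOf_add_le _ _ _) (max_le ?_ (le_trans d4 (by omega)))
    refine le_trans (degreeOf_sub_le _ _ _) (max_le ?_ (le_trans d3 (by omega)))
    refine le_trans (degreeOf_sub_le _ _ _) (max_le (le_trans d1 (by omega)) (le_trans d2 (by omega)))
  omega

end Stmt2
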